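/- With P(n) = E^n (E+1)^{-n-1} e^{-x/(E+1)} L_n(-x/(E(E+1))) as above (E > 0, x ≥ 0), the mean satisfies Σ_{n=0}^∞ n P(n) = E + x. -/

import Mathlib

open Real

/-- The `n`-th Laguerre polynomial `L_n(x) = ∑_{k=0}^n C(n,k) (-x)^k / k!`. -/
noncomputable def laguerre (n : ℕ) (x : ℝ) : ℝ :=
  ∑ k ∈ Finset.range (n + 1), (n.choose k : ℝ) * (-x) ^ k / (Nat.factorial k : ℝ)

lemma aux_nat_id (n k : ℕ) : n * n.choose k = (k+1) * n.choose (k+1) + k * n.choose k := by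
  rcases le_or_gt k n with h | h
  · calc n * n.choose k = n.choose k * ((n - k) + k) := by rw [Nat.sub_add_cancel h, Nat.mul_comm]
    _ = n.choose k * (n-k) + n.choose k * k := by ring
    _ = (k+1) * n.choose (k+1) + k * n.choose k := by rw [← Nat.choose_succ_right_eq]; ring
  · rw [Nat.choose_eq_zero_of_lt h, Nat.choose_eq_zero_of_lt (h.trans (Nat.lt_succ_self k))]
    simp

lemma aux_geom (t : ℝ) (ht : ‖t‖ < 1) (k : ℕ) :
    HasSum (fun n : ℕ => (n.choose k : ℝ) * t ^ n) (t^k * (1/(1-t)^(k+1))) := by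
  have h := (hasSum_choose_mul_geometric_of_norm_lt_one k ht).mul_left (t^k)
  have h2 : HasSum (fun n : ℕ => (((n+k).choose k : ℝ)) * t^(n+k)) (t^k * (1/(1-t)^(k+1))) := by
    convert h using 2 with n; rfl; rw [pow_add]; ring
  have hzero : ∑ i ∈ Finset.range k, ((i.choose k : ℝ) * t^i) = 0 :=
    Finset.sum_eq_zero (fun i hi => by
      rw [Nat.choose_eq_zero_of_lt (Finset.mem_range.mp hi)]; simp)
  exact (hasSum_nat_add_iff' k).mp (by rw [hzero, sub_zero]; exact h2)

lemma aux_geomN (t : ℝ) (ht : ‖t‖ < 1) (k : ℕ) :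
    HasSum (fun n : ℕ => (n:ℝ) * (n.choose k : ℝ) * t ^ n)
      (((k:ℝ)+1) * (t^(k+1) * (1/(1-t)^(k+1+1))) + (k:ℝ) * (t^k * (1/(1-t)^(k+1)))) := by
  have h := ((aux_geom t ht (k+1)).mul_left ((k:ℝ)+1)).add ((aux_geom t ht k).mul_left (k:ℝ))
  convert h using 2 with n
  rfl
  have h2 : ((n:ℝ)) * (n.choose k:ℝ) = ((k:ℝ)+1) * (n.choose (k+1):ℝ)
      + (k:ℝ) * (n.choose k:ℝ) := by exact_mod_cast aux_nat_id n k
  calc (n:ℝ) * (n.choose k:ℝ) * t^n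
      = (((k:ℝ)+1) * (n.choose (k+1):ℝ) + (k:ℝ) * (n.choose k:ℝ)) * t^n := by rw [h2]
    _ = ((k:ℝ)+1) * ((n.choose (k+1):ℝ) * t^n) + (k:ℝ) * ((n.choose k:ℝ) * t^n) := by ring

lemma aux_exp (c : ℝ) : HasSum (fun k : ℕ => c^k / (Nat.factorial k : ℝ)) (Real.exp c) := by
  rw [Real.exp_eq_exp_ℝ]
  exact NormedSpace.expSeries_div_hasSum_exp c

lemma aux_exp' (c : ℝ) :
    HasSum (fun k : ℕ => (k:ℝ) * c^k / (Nat.factorial k : ℝ)) (c * Real.exp c) := by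
  have h := (aux_exp c).mul_left c
  have h2 : HasSum (fun m : ℕ => ((m+1:ℕ):ℝ) * c^(m+1) / (Nat.factorial (m+1) : ℝ))
      (c * Real.exp c) := by
    convert h using 2 with m
    rfl
    rw [Nat.factorial_succ]
    push_cast
    have hm : (Nat.factorial m : ℝ) ≠ 0 := Nat.cast_ne_zero.mpr (Nat.factorial_ne_zero m)
    field_simp
    ring
  refine (hasSum_nat_add_iff' 1).mp ?_
  simpa using h2

/-- the mean photon number of a displaced thermal state with
thermal occupation `E` and displacement magnitude squared `x` is `E + x`. -/
theorem stmt18 (E x : ℝ) (hE : 0 < E) (hx : 0 ≤ x) :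
    ∑' n : ℕ, (n : ℝ) * (E ^ n * (E + 1) ^ (-(n : ℤ) - 1) * Real.exp (-x / (E + 1))
        * laguerre n (-x / (E * (E + 1)))) = E + x := by
  have hE1 : (0:ℝ) < E + 1 := by linarith
  have hE1' : (E:ℝ) + 1 ≠ 0 := ne_of_gt hE1
  set t : ℝ := E / (E + 1) with ht_def
  have ht0 : 0 ≤ t := div_nonneg hE.le hE1.le
  have ht1 : t < 1 := (div_lt_one hE1).mpr (by linarith)
  have htn : ‖t‖ < 1 := by rw [Real.norm_eq_abs, abs_of_nonneg ht0]; exact ht1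
  have h1t : 1 - t = 1/(E+1) := by rw [ht_def]; field_simp; ring
  set z : ℝ := x / (E * (E + 1)) with hz_def
  set c : ℝ := x / (E + 1) with hc_def
  have hz0 : 0 ≤ z := div_nonneg hx (by positivity)
  have hzE : z * E = c := by rw [hz_def, hc_def]; field_simp
  have hcx : c * (E + 1) = x := by rw [hc_def]; field_simp
  have hck : ∀ k : ℕ, c^k = z^k * E^k := fun k => by rw [← mul_pow, hzE]
  have htpow : ∀ a : ℕ, t^a * (1/(1-t)^(a+1)) = E^a * (E+1) := by
    intro a
    rw [h1t, ht_def, div_pow, one_div_pow]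
    have h1 : ((E:ℝ)+1)^a ≠ 0 := pow_ne_zero _ hE1'
    have h2 : ((E:ℝ)+1)^(a+1) ≠ 0 := pow_ne_zero _ hE1'
    field_simp
    ring
  set F : ℕ → ℕ → ℝ :=
    fun k n => (n:ℝ) * (n.choose k : ℝ) * t^n * (z^k / (Nat.factorial k : ℝ)) with hF_def
  -- inner sums
  have inner : ∀ k : ℕ, HasSum (fun n => F k n)
      ((E+1) * (((k:ℝ)+1) * E^(k+1) + (k:ℝ) * E^k) * (z^k / (Nat.factorial k : ℝ))) := by
    intro k
    have h := (aux_geomN t htn k).mul_right (z^k / (Nat.factorial k : ℝ))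
    rw [htpow (k+1), htpow k] at h
    convert h using 1
    rfl
    ring
  -- outer sum
  have Hexp := aux_exp c
  have Hk := aux_exp' c
  have combo := ((Hexp.add Hk).mul_left (E*(E+1))).add (Hk.mul_left (E+1))
  have outer : HasSum (fun k : ℕ =>
      (E+1) * (((k:ℝ)+1) * E^(k+1) + (k:ℝ) * E^k) * (z^k / (Nat.factorial k : ℝ)))
      ((E+x)*(E+1)*Real.exp c) := by
    have hfun : (fun k : ℕ =>
        (E+1) * (((k:ℝ)+1) * E^(k+1) + (k:ℝ) * E^k) * (z^k / (Nat.factorial k : ℝ)))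
        = fun k : ℕ => (E*(E+1)) * (c^k / (Nat.factorial k : ℝ)
            + (k:ℝ) * c^k / (Nat.factorial k : ℝ))
          + (E+1) * ((k:ℝ) * c^k / (Nat.factorial k : ℝ)) := by
      funext k; rw [hck k]; ring
    rw [hfun, show ((E+x)*(E+1)*Real.exp c)
        = E*(E+1)*(Real.exp c + c*Real.exp c) + (E+1)*(c*Real.exp c) by rw [← hcx]; ring]
    exact combo
  -- summability of the double family
  have hnn : (0:ℕ × ℕ → ℝ) ≤ fun p : ℕ × ℕ => F p.1 p.2 := by
    intro p
    exact mul_nonneg (mul_nonneg (mul_nonneg (Nat.cast_nonneg _) (Nat.cast_nonneg _))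
      (pow_nonneg ht0 _)) (div_nonneg (pow_nonneg hz0 _) (Nat.cast_nonneg _))
  have hFs : Summable (Function.uncurry F) := by
    refine (summable_prod_of_nonneg hnn).mpr ⟨fun k => (inner k).summable, ?_⟩
    have : (fun k : ℕ => ∑' n, F k n) = fun k : ℕ =>
        (E+1) * (((k:ℝ)+1) * E^(k+1) + (k:ℝ) * E^k) * (z^k / (Nat.factorial k : ℝ)) :=
      funext fun k => (inner k).tsum_eq
    rw [this]
    exact outer.summable
  -- per-term rewriting
  have hterm : ∀ n : ℕ, (n : ℝ) * (E ^ n * (E + 1) ^ (-(n : ℤ) - 1) * Real.exp (-x / (E + 1))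
      * laguerre n (-x / (E * (E + 1))))
      = (Real.exp (-c)/(E+1)) * ∑ k ∈ Finset.range (n+1), F k n := by
    intro n
    have hzpow : (E+1:ℝ) ^ (-(n:ℤ)-1) = ((E+1)^(n+1))⁻¹ := by
      rw [show (-(n:ℤ)-1) = -((n+1 : ℕ) : ℤ) by push_cast; ring, zpow_neg, zpow_natCast]
    have harg : -x / (E * (E + 1)) = -z := by rw [neg_div, hz_def]
    have harg2 : -x / (E+1) = -c := by rw [neg_div, hc_def]
    rw [hzpow, harg, harg2, laguerre]
    simp only [neg_neg]
    rw [Finset.mul_sum, Finset.mul_sum, Finset.mul_sum]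
    refine Finset.sum_congr rfl fun k _ => ?_
    rw [hF_def, ht_def]
    simp only [div_pow E (E+1) n]
    have hk : (Nat.factorial k : ℝ) ≠ 0 := Nat.cast_ne_zero.mpr (Nat.factorial_ne_zero k)
    have hpow : ((E:ℝ)+1)^n ≠ 0 := pow_ne_zero _ hE1'
    field_simp
    ring
  -- main computation
  calc ∑' n : ℕ, (n : ℝ) * (E ^ n * (E + 1) ^ (-(n : ℤ) - 1) * Real.exp (-x / (E + 1))
        * laguerre n (-x / (E * (E + 1))))
      = ∑' n : ℕ, (Real.exp (-c)/(E+1)) * ∑' k, F k n := by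
        refine tsum_congr fun n => ?_
        rw [hterm n, tsum_eq_sum (s := Finset.range (n+1)) ?_]
        intro k hk
        have : n < k := by simpa using Finset.mem_range.not.mp hk
        simp [hF_def, Nat.choose_eq_zero_of_lt this]
    _ = (Real.exp (-c)/(E+1)) * ∑' n, ∑' k, F k n := tsum_mul_left
    _ = (Real.exp (-c)/(E+1)) * ∑' k, ∑' n, F k n := by rw [hFs.tsum_comm]
    _ = (Real.exp (-c)/(E+1)) * ((E+x)*(E+1)*Real.exp c) := by
        rw [tsum_congr fun k => (inner k).tsum_eq, outer.tsum_eq]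
    _ = E + x := by
        rw [Real.exp_neg]
        have hec : Real.exp c ≠ 0 := (Real.exp_pos c).ne'
        field_simp
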